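/- If f(t)/t is increasing on (0,∞), then its primitive F satisfies: F(s)/s² is increasing on (0,∞), and consequently for any measurable u ≥ 0 and any λ ≥ 1, F(λ u(z)) ≥ λ² F(u(z)) pointwise; hence K(λu)(z) ≥ λ² K(u)(z) where K(v) = |·|^{-γ}*F(v). -/

import Mathlib

open MeasureTheory ENNReal

/-- Nonlocal term as a lower integral:
`K(v)(z) = ∫ F(v(z')) |z - z'|^{-γ} dz'`. -/
noncomputable def Klin {N : ℕ} (γ : ℝ) (F : ℝ → ℝ)
    (v : EuclideanSpace ℝ (Fin N) → ℝ) (z : EuclideanSpace ℝ (Fin N)) : ℝ≥0∞ :=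
  ∫⁻ z', ENNReal.ofReal (F (v z') * ‖z - z'‖ ^ (-γ))

theorem stmt13 (N : ℕ) (hN : 1 ≤ N) (γ : ℝ) (hγ0 : 0 < γ) (hγN : γ < N)
    (f F : ℝ → ℝ) (hf : Continuous f)
    (hf0 : ∀ t ≤ (0:ℝ), f t = 0) (hfpos : ∀ t > (0:ℝ), 0 < f t)
    (hmono : StrictMonoOn (fun t => f t / t) (Set.Ioi (0:ℝ)))
    (hF : ∀ t, F t = ∫ s in (0:ℝ)..t, f s) :
    StrictMonoOn (fun s => F s / s ^ 2) (Set.Ioi (0:ℝ)) ∧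
      ∀ u : EuclideanSpace ℝ (Fin N) → ℝ, (∀ z, 0 ≤ u z) →
        ∀ lam : ℝ, 1 ≤ lam →
          (∀ z, lam ^ 2 * F (u z) ≤ F (lam * u z)) ∧
          (∀ z, ENNReal.ofReal (lam ^ 2) * Klin γ F u z ≤
            Klin γ F (fun z' => lam * u z') z) := by
  have hInt : ∀ a b : ℝ, IntervalIntegrable f MeasureTheory.volume a b :=
    fun a b => hf.intervalIntegrable a b
  -- F a ≤ (f a / a) * a^2 / 2 for a > 0
  have key1 : ∀ a : ℝ, 0 < a → F a ≤ f a / a * a ^ 2 / 2 := by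
    intro a ha
    have h1 : F a ≤ ∫ s in (0:ℝ)..a, (f a / a) * s := by
      rw [hF]
      apply intervalIntegral.integral_mono_on ha.le (hInt 0 a)
        ((continuous_const.mul continuous_id').intervalIntegrable 0 a)
      intro s hs
      rcases eq_or_lt_of_le hs.1 with h0 | h0
      · rw [← h0, hf0 0 le_rfl]
        simp
      · have hle : f s / s ≤ f a / a :=
          hmono.monotoneOn (Set.mem_Ioi.2 h0) (Set.mem_Ioi.2 ha) hs.2
        exact (div_le_iff₀ h0).mp hle
    have h2 : (∫ s in (0:ℝ)..a, (f a / a) * s) = f a / a * a ^ 2 / 2 := by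
      rw [intervalIntegral.integral_const_mul, integral_id]
      ring
    linarith [h1, h2.le]
  -- F b - F a > (f a / a) * (b^2 - a^2) / 2 for 0 < a < b
  have key2 : ∀ a b : ℝ, 0 < a → a < b → f a / a * (b ^ 2 - a ^ 2) / 2 < F b - F a := by
    intro a b ha hab
    have hdiff : F b - F a = ∫ s in a..b, f s := by
      rw [hF, hF, ← intervalIntegral.integral_add_adjacent_intervals (hInt 0 a) (hInt a b)]
      ring
    have hpos : 0 < ∫ s in a..b, (f s - f a / a * s) := by
      apply intervalIntegral.intervalIntegral_pos_of_pos_on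
      · exact ((hf.sub (continuous_const.mul continuous_id')).intervalIntegrable a b)
      · intro s hs
        have hs0 : 0 < s := ha.trans hs.1
        have hlt : f a / a < f s / s :=
          hmono (Set.mem_Ioi.2 ha) (Set.mem_Ioi.2 hs0) hs.1
        have : f a / a * s < f s := (lt_div_iff₀ hs0).mp hlt
        linarith
      · exact hab
    rw [intervalIntegral.integral_sub (g := fun s => f a / a * s) (hInt a b)
      ((continuous_const.mul continuous_id').intervalIntegrable a b),
      intervalIntegral.integral_const_mul, integral_id] at hpos
    have : f a / a * ((b ^ 2 - a ^ 2) / 2) < ∫ s in a..b, f s := by linarith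
    rw [hdiff]
    linarith
  have hsm : StrictMonoOn (fun s => F s / s ^ 2) (Set.Ioi (0:ℝ)) := by
    intro a ha b hb hab
    simp only [Set.mem_Ioi] at ha hb
    have h1 := key1 a ha
    have h2 := key2 a b ha hab
    have hc : 0 < f a / a := div_pos (hfpos a ha) ha
    have ha2 : (0:ℝ) < a ^ 2 := by positivity
    have hb2 : (0:ℝ) < b ^ 2 := by positivity
    simp only
    rw [div_lt_div_iff₀ ha2 hb2]
    nlinarith [mul_pos hc (sub_pos.mpr (mul_self_lt_mul_self ha.le hab)),
      mul_le_mul_of_nonneg_right h1 (sub_pos.mpr (by nlinarith : a ^ 2 < b ^ 2)).le]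
  have hF0 : F 0 = 0 := by rw [hF]; simp
  have hpt : ∀ t : ℝ, 0 ≤ t → ∀ lam : ℝ, 1 ≤ lam → lam ^ 2 * F t ≤ F (lam * t) := by
    intro t ht lam hlam
    rcases eq_or_lt_of_le ht with h0 | h0
    · rw [← h0, mul_zero, hF0, mul_zero]
    · rcases eq_or_lt_of_le hlam with h1 | h1
      · rw [← h1]; ring_nf; simp
      · have hlt : F t / t ^ 2 < F (lam * t) / (lam * t) ^ 2 :=
          hsm (Set.mem_Ioi.2 h0) (Set.mem_Ioi.2 (by positivity))
            (by nlinarith)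
        have ht2 : (0:ℝ) < t ^ 2 := by positivity
        have hlt2 : (0:ℝ) < (lam * t) ^ 2 := by positivity
        rw [div_lt_div_iff₀ ht2 hlt2] at hlt
        nlinarith
  refine ⟨hsm, fun u hu lam hlam => ⟨fun z => hpt (u z) (hu z) lam hlam, fun z => ?_⟩⟩
  unfold Klin
  rw [← lintegral_const_mul' _ _ ENNReal.ofReal_ne_top]
  apply lintegral_mono
  intro z'
  dsimp only
  rw [← ENNReal.ofReal_mul (by positivity)]
  apply ENNReal.ofReal_le_ofReal
  have hc : 0 ≤ ‖z - z'‖ ^ (-γ) := Real.rpow_nonneg (norm_nonneg _) _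
  calc lam ^ 2 * (F (u z') * ‖z - z'‖ ^ (-γ))
      = (lam ^ 2 * F (u z')) * ‖z - z'‖ ^ (-γ) := by ring
    _ ≤ F (lam * u z') * ‖z - z'‖ ^ (-γ) :=
        mul_le_mul_of_nonneg_right (hpt (u z') (hu z') lam hlam) hc
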